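/- Let r ≥ 1 be an integer and let G be a connected simple graph in which every edge lies in a triangle. Then G admits a graph homomorphism to the complete graph K_3 if and only if the (5^r − 1)-subdivision G^{5^r−1} admits a graph homomorphism to the cycle C_{3·5^r}. -/

import Mathlib

/-- Representatives of internal vertices of the `k`-subdivision of `G`:
a dart `d` of `G` together with a position `i : Fin k`; the pair `(d, i)` is
identified with `(d.symm, k - 1 - i)`. -/
def SubdivRep {V : Type*} (G : SimpleGraph V) (k : ℕ) :
    G.Dart × Fin k → G.Dart × Fin k → Prop :=
  fun a b => b.1 = a.1.symm ∧ (b.2 : ℕ) = k - 1 - (a.2 : ℕ)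

/-- Internal vertices of the `k`-subdivision of `G`. -/
abbrev SubdivInternal {V : Type*} (G : SimpleGraph V) (k : ℕ) :=
  Quot (SubdivRep G k)

/-- Vertices of the `k`-subdivision of `G`: the branch vertices (`Sum.inl`)
are the original vertices of `G`, and `Sum.inr` are the internal vertices. -/
abbrev SubdivVertex {V : Type*} (G : SimpleGraph V) (k : ℕ) :=
  V ⊕ SubdivInternal G k

/-- One-directional adjacency for the `k`-subdivision: a branch vertex `u` is
adjacent to the first internal vertex of any edge of `G` leaving `u` (via the
identification, also to the last internal vertex of any edge entering `u`),
and consecutive internal vertices on a subdivided edge are adjacent. -/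
def SubdivAdjBase {V : Type*} (G : SimpleGraph V) (k : ℕ) :
    SubdivVertex G k → SubdivVertex G k → Prop
  | Sum.inl u, Sum.inr x =>
      ∃ (d : G.Dart) (i : Fin k), (i : ℕ) = 0 ∧ d.toProd.1 = u ∧
        x = Quot.mk (SubdivRep G k) (d, i)
  | Sum.inr x, Sum.inr y =>
      ∃ (d : G.Dart) (i j : Fin k), (j : ℕ) = (i : ℕ) + 1 ∧
        x = Quot.mk (SubdivRep G k) (d, i) ∧ y = Quot.mk (SubdivRep G k) (d, j)
  | _, _ => False

/-- The `k`-subdivision of a simple graph `G`: every edge `uv` of `G` is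
replaced by a path from `u` to `v` through `k` new internal vertices. -/
def Subdivision {V : Type*} (G : SimpleGraph V) (k : ℕ) :
    SimpleGraph (SubdivVertex G k) where
  Adj x y := x ≠ y ∧ (SubdivAdjBase G k x y ∨ SubdivAdjBase G k y x)
  symm := ⟨fun x y h => ⟨Ne.symm h.1, h.2.symm⟩⟩
  loopless := ⟨fun x h => h.1 rfl⟩

/-- The cycle `C_n` with vertex set `ZMod n`, where `j` is adjacent to `j + 1`. -/
def cycleZMod (n : ℕ) : SimpleGraph (ZMod n) where
  Adj i j := i ≠ j ∧ (j = i + 1 ∨ i = j + 1)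
  symm := ⟨fun i j h => ⟨Ne.symm h.1, h.2.symm⟩⟩
  loopless := ⟨fun i h => h.1 rfl⟩

def subdivTheta {V : Type*} (G : SimpleGraph V) (k : ℕ) : SubdivInternal G k → Sym2 (V × ℕ) :=
  Quot.lift (fun p => s((p.1.toProd.1, (p.2 : ℕ)), (p.1.toProd.2, k - 1 - (p.2 : ℕ))))
    (by
      rintro ⟨d, i⟩ ⟨d', j⟩ ⟨hd, hj⟩
      subst hd
      simp only at hj ⊢
      have hi : (i : ℕ) < k := i.isLt
      have h2 : k - 1 - (k - 1 - (i : ℕ)) = (i : ℕ) := by omega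
      rw [hj, h2]
      exact Sym2.eq_swap)

lemma quot_mk_ne {V : Type*} {G : SimpleGraph V} {k : ℕ} {d : G.Dart} {i j : Fin k}
    (h : (j : ℕ) = (i : ℕ) + 1) :
    Quot.mk (SubdivRep G k) (d, i) ≠ Quot.mk (SubdivRep G k) (d, j) := by
  intro he
  have h2 := congrArg (subdivTheta G k) he
  simp only [subdivTheta, Sym2.eq_iff, Prod.mk.injEq] at h2
  rcases h2 with ⟨⟨_, h3⟩, _⟩ | ⟨⟨h4, _⟩, _⟩
  · omega
  · exact d.fst_ne_snd h4

lemma cyc_adj_elim {n : ℕ} {x y : ZMod n} (h : (cycleZMod n).Adj x y) :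
    ∃ e : ℤ, (e = 1 ∨ e = -1) ∧ y = x + e := by
  rcases h.2 with h2 | h2
  · exact ⟨1, Or.inl rfl, by rw [h2]; push_cast; ring⟩
  · exact ⟨-1, Or.inr rfl, by rw [h2]; push_cast; ring⟩

lemma backward_hom {V : Type*} (G : SimpleGraph V) (m k : ℕ) (hm : k + 1 = m)
    (hk : 0 < k) (hodd : m % 2 = 1) (hm3 : ¬ (3 ∣ m))
    (htri : ∀ u v : V, G.Adj u v → ∃ z : V, G.Adj u z ∧ G.Adj v z)
    (g : Subdivision G k →g cycleZMod (3 * m)) :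
    Nonempty (G →g SimpleGraph.completeGraph (Fin 3)) := by
  -- displacement along a subdivided edge
  have key : ∀ d : G.Dart, ∃ a : ℤ, a.natAbs ≤ m ∧ a % 2 = (m : ℤ) % 2 ∧
      g (Sum.inl d.toProd.2) = g (Sum.inl d.toProd.1) + (a : ZMod (3 * m)) := by
    intro d
    have step : ∀ i : ℕ, ∀ h : i < k, ∃ a : ℤ, a.natAbs ≤ i + 1 ∧
        a % 2 = ((i : ℤ) + 1) % 2 ∧
        g (Sum.inr (Quot.mk (SubdivRep G k) (d, ⟨i, h⟩))) =
          g (Sum.inl d.toProd.1) + (a : ZMod (3 * m)) := by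
      intro i
      induction i with
      | zero =>
        intro h
        have hadj : (Subdivision G k).Adj (Sum.inl d.toProd.1)
            (Sum.inr (Quot.mk (SubdivRep G k) (d, ⟨0, h⟩))) :=
          ⟨by simp, Or.inl ⟨d, ⟨0, h⟩, rfl, rfl, rfl⟩⟩
        obtain ⟨e, he, hye⟩ := cyc_adj_elim (g.map_adj hadj)
        exact ⟨e, by rcases he with rfl | rfl <;> simp,
          by rcases he with rfl | rfl <;> simp, hye⟩
      | succ i ih =>
        intro h
        have hik : i < k := Nat.lt_of_succ_lt h
        obtain ⟨a, ha1, ha2, ha3⟩ := ih hik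
        have hadj : (Subdivision G k).Adj
            (Sum.inr (Quot.mk (SubdivRep G k) (d, ⟨i, hik⟩)))
            (Sum.inr (Quot.mk (SubdivRep G k) (d, ⟨i + 1, h⟩))) := by
          refine ⟨?_, Or.inl ⟨d, ⟨i, hik⟩, ⟨i + 1, h⟩, rfl, rfl, rfl⟩⟩
          intro hcon
          exact quot_mk_ne (i := (⟨i, hik⟩ : Fin k)) (j := ⟨i + 1, h⟩) rfl
            (Sum.inr_injective hcon)
        obtain ⟨e, he, hye⟩ := cyc_adj_elim (g.map_adj hadj)
        refine ⟨a + e, by rcases he with rfl | rfl <;> omega,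
          by rcases he with rfl | rfl <;> omega, ?_⟩
        rw [hye, ha3]
        push_cast
        ring
    obtain ⟨a, ha1, ha2, ha3⟩ := step (k - 1) (by omega)
    have hquot : Quot.mk (SubdivRep G k) (d, ⟨k - 1, by omega⟩) =
        Quot.mk (SubdivRep G k) (d.symm, ⟨0, hk⟩) :=
      Quot.sound ⟨rfl, by simp⟩
    have hadj : (Subdivision G k).Adj (Sum.inl d.toProd.2)
        (Sum.inr (Quot.mk (SubdivRep G k) (d.symm, ⟨0, hk⟩))) :=
      ⟨by simp, Or.inl ⟨d.symm, ⟨0, hk⟩, rfl, rfl, rfl⟩⟩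
    obtain ⟨e, he, hye⟩ := cyc_adj_elim (g.map_adj hadj)
    refine ⟨a - e, by rcases he with rfl | rfl <;> omega,
      by rcases he with rfl | rfl <;> omega, ?_⟩
    rw [← hquot] at hye
    have : g (Sum.inl d.toProd.2) =
        g (Sum.inr (Quot.mk (SubdivRep G k) (d, ⟨k - 1, by omega⟩))) - (e : ZMod (3 * m)) := by
      rw [hye]; ring
    rw [this, ha3]
    push_cast
    ring
  -- for every edge, displacement is ± m
  have edge_disp : ∀ u v : V, G.Adj u v → ∃ a : ℤ, (a = m ∨ a = -(m : ℤ)) ∧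
      g (Sum.inl v) = g (Sum.inl u) + (a : ZMod (3 * m)) := by
    intro u v huv
    obtain ⟨z, huz, hvz⟩ := htri u v huv
    obtain ⟨a, ha1, ha2, ha3⟩ := key ⟨(u, v), huv⟩
    obtain ⟨b, hb1, hb2, hb3⟩ := key ⟨(v, z), hvz⟩
    obtain ⟨c, hc1, hc2, hc3⟩ := key ⟨(z, u), huz.symm⟩
    simp only at ha3 hb3 hc3
    have hsum : ((a + b + c : ℤ) : ZMod (3 * m)) = 0 := by
      have : g (Sum.inl u) = g (Sum.inl u) + ((a + b + c : ℤ) : ZMod (3 * m)) := by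
        push_cast
        linear_combination ha3 + hb3 + hc3
      have h0 := (left_eq_add).mp this
      exact h0
    have hdvd : ((3 * m : ℕ) : ℤ) ∣ (a + b + c) :=
      (ZMod.intCast_zmod_eq_zero_iff_dvd _ _).mp hsum
    obtain ⟨t, ht⟩ := hdvd
    have hodd' : (a + b + c) % 2 = 1 := by omega
    have ht0 : t ≠ 0 := by
      rintro rfl
      rw [mul_zero] at ht
      omega
    have h4 : 1 ≤ |t| := Int.one_le_abs ht0
    have h3 : |a + b + c| = 3 * (m : ℤ) * |t| := by
      rw [ht, abs_mul]
      congr 1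
      · push_cast; exact abs_of_nonneg (by positivity)
    have h5 : 3 * (m : ℤ) ≤ |a + b + c| := by nlinarith
    rw [Int.abs_eq_natAbs] at h5
    refine ⟨a, by omega, ha3⟩
  -- the 3-coloring
  have h3n : (3 : ℕ) ∣ 3 * m := ⟨m, rfl⟩
  set φ : ZMod (3 * m) →+* ZMod 3 := ZMod.castHom h3n (ZMod 3) with hφ
  have hfne : ∀ u v : V, G.Adj u v → φ (g (Sum.inl u)) ≠ φ (g (Sum.inl v)) := by
    intro u v huv heq
    obtain ⟨a, ha, hdisp⟩ := edge_disp u v huv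
    have : φ (g (Sum.inl v)) = φ (g (Sum.inl u)) + ((a : ℤ) : ZMod 3) := by
      rw [hdisp, map_add, map_intCast]
    rw [← heq] at this
    have h0 : ((a : ℤ) : ZMod 3) = 0 := (left_eq_add).mp this
    have hdvd3 : (3 : ℤ) ∣ a := (ZMod.intCast_zmod_eq_zero_iff_dvd _ _).mp h0
    rcases ha with rfl | rfl <;> [skip; rw [dvd_neg] at hdvd3] <;>
      exact hm3 (by exact_mod_cast hdvd3)
  exact ⟨⟨fun u => φ (g (Sum.inl u)), fun {u v} h => (SimpleGraph.top_adj _ _).mpr (hfne u v h)⟩⟩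


lemma cyc_adj_step {n : ℕ} (hn : 1 < n) (x : ZMod n) (e : ℤ) (he : e = 1 ∨ e = -1) :
    (cycleZMod n).Adj x (x + e) := by
  haveI : Fact (1 < n) := ⟨hn⟩
  have h1 : (1 : ZMod n) ≠ 0 := one_ne_zero
  rcases he with rfl | rfl
  · refine ⟨fun h => h1 ?_, Or.inl (by push_cast; ring)⟩
    have := (left_eq_add (a := x) (b := ((1:ℤ) : ZMod n))).mp h
    push_cast at this; exact this
  · refine ⟨fun h => h1 ?_, Or.inr (by push_cast; ring)⟩
    have := (left_eq_add (a := x) (b := ((-1:ℤ) : ZMod n))).mp h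
    push_cast at this; linear_combination -this

/-- direction sign -/
def epsl (a b : ℕ) : ℤ := if b % 3 = (a + 1) % 3 then 1 else -1

lemma epsl_pm (a b : ℕ) : epsl a b = 1 ∨ epsl a b = -1 := by
  unfold epsl; split_ifs <;> simp

lemma epsl_swap {a b : ℕ} (ha : a < 3) (hb : b < 3) (hab : a ≠ b) :
    epsl b a = -epsl a b := by
  unfold epsl; split_ifs with h1 h2 h2 <;> omega

lemma epsl_cong {a b : ℕ} (ha : a < 3) (hb : b < 3) (hab : a ≠ b) :
    (3 : ℤ) ∣ ((b : ℤ) - a - epsl a b) := by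
  unfold epsl; split_ifs with h1 <;> omega

lemma forward_hom {V : Type*} (G : SimpleGraph V) (m k : ℕ) (hm : k + 1 = m)
    (f : V → Fin 3) (hf : ∀ u v, G.Adj u v → f u ≠ f v) :
    Nonempty (Subdivision G k →g cycleZMod (3 * m)) := by
  have hn1 : 1 < 3 * m := by omega
  -- value at internal representative
  set Fi : G.Dart × Fin k → ZMod (3 * m) := fun p =>
    (((m : ℤ) * (f p.1.toProd.1 : ℕ) +
      epsl (f p.1.toProd.1 : ℕ) (f p.1.toProd.2 : ℕ) * ((p.2 : ℕ) + 1) : ℤ) : ZMod (3 * m))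
    with hFi
  have hwd : ∀ p q, SubdivRep G k p q → Fi p = Fi q := by
    rintro ⟨d, i⟩ ⟨d', j⟩ ⟨hd, hj⟩
    subst hd
    simp only [hFi]
    have hne : (f d.toProd.1 : ℕ) ≠ (f d.toProd.2 : ℕ) := by
      intro h; exact hf _ _ d.adj (Fin.val_injective h)
    set a : ℕ := (f d.toProd.1 : ℕ) with haa
    set b : ℕ := (f d.toProd.2 : ℕ) with hbb
    have ha : a < 3 := (f d.toProd.1).isLt
    have hb : b < 3 := (f d.toProd.2).isLt
    have hsymm1 : d.symm.toProd.1 = d.toProd.2 := rfl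
    have hsymm2 : d.symm.toProd.2 = d.toProd.1 := rfl
    rw [hsymm1, hsymm2, ← haa, ← hbb]
    have hswap : epsl b a = -epsl a b := epsl_swap ha hb hne
    obtain ⟨t, ht⟩ := epsl_cong ha hb hne
    rw [ZMod.intCast_eq_intCast_iff]
    have hi : (i : ℕ) < k := i.isLt
    have hJ : ((j : ℕ) : ℤ) + 1 + (i : ℕ) + 1 = m := by
      simp only at hj; omega
    refine Int.modEq_iff_dvd.mpr ⟨t, ?_⟩
    rw [hswap]
    push_cast
    linear_combination (m : ℤ) * ht - (epsl a b) * hJ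
  refine ⟨⟨Sum.elim (fun u => (((m : ℤ) * (f u : ℕ) : ℤ) : ZMod (3 * m)))
      (Quot.lift Fi hwd), ?_⟩⟩
  have key : ∀ x y, SubdivAdjBase G k x y →
      (cycleZMod (3 * m)).Adj (Sum.elim (fun u => (((m : ℤ) * (f u : ℕ) : ℤ) : ZMod (3 * m)))
        (Quot.lift Fi hwd) x)
      (Sum.elim (fun u => (((m : ℤ) * (f u : ℕ) : ℤ) : ZMod (3 * m))) (Quot.lift Fi hwd) y) := by
    rintro (u | x) (v | y) h
    · exact absurd h not_false
    · obtain ⟨d, i, hi0, rfl, rfl⟩ := h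
      simp only [Sum.elim_inl, Sum.elim_inr]
      simp only [hFi]
      have he := epsl_pm (f d.toProd.1 : ℕ) (f d.toProd.2 : ℕ)
      have heq : (((m : ℤ) * (f d.toProd.1 : ℕ) +
          epsl (f d.toProd.1 : ℕ) (f d.toProd.2 : ℕ) * ((i : ℕ) + 1) : ℤ) : ZMod (3 * m)) =
          (((m : ℤ) * (f d.toProd.1 : ℕ) : ℤ) : ZMod (3 * m)) +
            (epsl (f d.toProd.1 : ℕ) (f d.toProd.2 : ℕ) : ZMod (3 * m)) := by
        rw [hi0]; push_cast; ring
      rw [heq]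
      exact cyc_adj_step hn1 _ _ he
    · exact absurd h not_false
    · obtain ⟨d, i, j, hij, rfl, rfl⟩ := h
      simp only [Sum.elim_inr]
      simp only [hFi]
      have he := epsl_pm (f d.toProd.1 : ℕ) (f d.toProd.2 : ℕ)
      have heq : (((m : ℤ) * (f d.toProd.1 : ℕ) +
          epsl (f d.toProd.1 : ℕ) (f d.toProd.2 : ℕ) * ((j : ℕ) + 1) : ℤ) : ZMod (3 * m)) =
          (((m : ℤ) * (f d.toProd.1 : ℕ) +
            epsl (f d.toProd.1 : ℕ) (f d.toProd.2 : ℕ) * ((i : ℕ) + 1) : ℤ) : ZMod (3 * m)) +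
            (epsl (f d.toProd.1 : ℕ) (f d.toProd.2 : ℕ) : ZMod (3 * m)) := by
        rw [hij]; push_cast; ring
      rw [heq]
      exact cyc_adj_step hn1 _ _ he
  rintro x y ⟨hne, h | h⟩
  · exact key x y h
  · exact ((key y x h).symm)

/-- Let `r ≥ 1` and let `G` be a connected graph in which every edge lies in a
triangle.  Then `G → K₃` if and only if `G^{5^r - 1} → C_{3·5^r}`. -/
theorem statement0 {V : Type*} (r : ℕ) (hr : 1 ≤ r) (G : SimpleGraph V)
    (hconn : G.Connected)
    (htri : ∀ u v : V, G.Adj u v → ∃ z : V, G.Adj u z ∧ G.Adj v z) :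
    Nonempty (G →g SimpleGraph.completeGraph (Fin 3)) ↔
      Nonempty (Subdivision G (5 ^ r - 1) →g cycleZMod (3 * 5 ^ r)) := by
  constructor
  · rintro ⟨f⟩
    have h1 : 1 ≤ 5 ^ r := Nat.one_le_pow r 5 (by norm_num)
    have hf : ∀ u v : V, G.Adj u v → f u ≠ f v := fun u v h => by
      simpa using f.map_adj h
    exact forward_hom G (5 ^ r) (5 ^ r - 1) (by omega) f hf
  · rintro ⟨g⟩
    have h1 : 5 ^ 1 ≤ 5 ^ r := Nat.pow_le_pow_right (by norm_num) hr
    have hodd : (5 : ℕ) ^ r % 2 = 1 := Nat.odd_iff.mp (Odd.pow (by decide : Odd 5))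
    have hm3 : ¬ ((3 : ℕ) ∣ 5 ^ r) := by
      intro h
      have := Nat.Prime.dvd_of_dvd_pow (Nat.prime_three) h
      norm_num at this
    exact backward_hom G (5 ^ r) (5 ^ r - 1) (by omega) (by omega) hodd hm3 htri g
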